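/- arXiv:cs/0607058 — 2 statements merged into one kernel-verified Lean document; each statement's English description precedes it below -/
import Mathlib

section
/- If the sequent Γ₁ ∪ Γ₂ ⊢ Δ₁ ∪ Δ₂ is derivable, where the set of predicates occurring in Γ₁ ∪ Δ₁ is disjoint from the set of predicates occurring in Γ₂ ∪ Δ₂, then Γ₁ ⊢ Δ₁ is derivable or Γ₂ ⊢ Δ₂ is derivable. -/
namespace Craig

abbrev var : Type := Nat
abbrev tm : Type := var
abbrev pred : Type := Nat

inductive form : Type
  | P : pred → List tm → form
  | Bot : form
  | Top : form
  | And : form → form → form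
  | Or : form → form → form
  | Not : form → form
  | FAll : form → form
  | FEx : form → form
  deriving DecidableEq

def liftSub (s : var → tm) : var → tm
  | 0 => 0
  | n + 1 => (s n) + 1

def fsubst (s : var → tm) : form → form
  | .P i tms => .P i (tms.map s)
  | .Bot => .Bot
  | .Top => .Top
  | .And A B => .And (fsubst s A) (fsubst s B)
  | .Or A B => .Or (fsubst s A) (fsubst s B)
  | .Not A => .Not (fsubst s A)
  | .FAll A => .FAll (fsubst (liftSub s) A)
  | .FEx A => .FEx (fsubst (liftSub s) A)

def preSuc : List Nat → List Nat
  | [] => []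
  | 0 :: l => preSuc l
  | (n + 1) :: l => n :: preSuc l

def fv : form → List var
  | .P _ tms => tms
  | .Bot => []
  | .Top => []
  | .And A B => fv A ++ fv B
  | .Or A B => fv A ++ fv B
  | .Not A => fv A
  | .FAll A => preSuc (fv A)
  | .FEx A => preSuc (fv A)

def posneg : form → Set pred × Set pred
  | .P i _ => ({i}, ∅)
  | .Bot => (∅, ∅)
  | .Top => (∅, ∅)
  | .And A B => ((posneg A).1 ∪ (posneg B).1, (posneg A).2 ∪ (posneg B).2)
  | .Or A B => ((posneg A).1 ∪ (posneg B).1, (posneg A).2 ∪ (posneg B).2)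
  | .Not A => ((posneg A).2, (posneg A).1)
  | .FAll A => posneg A
  | .FEx A => posneg A

def pos (A : form) : Set pred := (posneg A).1
def neg (A : form) : Set pred := (posneg A).2

def fAll (a : var) (A : form) : form :=
  .FAll (fsubst (fun v => if v = a then 0 else v + 1) A)
def fEx (a : var) (A : form) : form :=
  .FEx (fsubst (fun v => if v = a then 0 else v + 1) A)

def FAll_inst (t : tm) : form → form
  | .FAll A => fsubst (fun v => match v with | 0 => t | n + 1 => n) A
  | A => A

def FEx_inst (t : tm) : form → form
  | .FEx A => fsubst (fun v => match v with | 0 => t | n + 1 => n) A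
  | A => A

abbrev Seq : Type := Set form × Set form

def fvs (S : Set form) : Set var := ⋃ A ∈ S, {v | v ∈ fv A}

inductive Deriv : Type
  | Init : Seq → Deriv
  | BotL : Seq → Deriv
  | TopR : Seq → Deriv
  | AndL : Seq → Deriv → Deriv
  | AndR : Seq → Deriv → Deriv → Deriv
  | OrL : Seq → Deriv → Deriv → Deriv
  | OrR : Seq → Deriv → Deriv
  | NotL : Seq → Deriv → Deriv
  | NotR : Seq → Deriv → Deriv
  | AllL : Seq → Deriv → Deriv
  | AllR : Seq → Deriv → Deriv
  | ExL : Seq → Deriv → Deriv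
  | ExR : Seq → Deriv → Deriv
  | WL : Seq → Deriv → Deriv
  | WR : Seq → Deriv → Deriv

def root : Deriv → Seq
  | .Init s => s
  | .BotL s => s
  | .TopR s => s
  | .AndL s _ => s
  | .AndR s _ _ => s
  | .OrL s _ _ => s
  | .OrR s _ => s
  | .NotL s _ => s
  | .NotR s _ => s
  | .AllL s _ => s
  | .AllR s _ => s
  | .ExL s _ => s
  | .ExR s _ => s
  | .WL s _ => s
  | .WR s _ => s

def is_deriv : Deriv → Prop
  | .Init s => s.1.Finite ∧ s.2.Finite ∧ ∃ A, A ∈ s.1 ∧ A ∈ s.2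
  | .BotL s => s.1.Finite ∧ s.2.Finite ∧ form.Bot ∈ s.1
  | .TopR s => s.1.Finite ∧ s.2.Finite ∧ form.Top ∈ s.2
  | .AndL s d => s.1.Finite ∧ s.2.Finite ∧
      ∃ A B, form.And A B ∈ s.1 ∧ is_deriv d ∧ root d = ({A, B} ∪ s.1, s.2)
  | .AndR s dl dr => s.1.Finite ∧ s.2.Finite ∧
      ∃ A B, form.And A B ∈ s.2 ∧ is_deriv dl ∧ root dl = (s.1, s.2 ∪ {A}) ∧
        is_deriv dr ∧ root dr = (s.1, s.2 ∪ {B})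
  | .OrL s dl dr => s.1.Finite ∧ s.2.Finite ∧
      ∃ A B, form.Or A B ∈ s.1 ∧ is_deriv dl ∧ root dl = ({A} ∪ s.1, s.2) ∧
        is_deriv dr ∧ root dr = ({B} ∪ s.1, s.2)
  | .OrR s d => s.1.Finite ∧ s.2.Finite ∧
      ∃ A B, form.Or A B ∈ s.2 ∧ is_deriv d ∧ root d = (s.1, s.2 ∪ {A, B})
  | .NotL s d => s.1.Finite ∧ s.2.Finite ∧
      ∃ C, form.Not C ∈ s.1 ∧ is_deriv d ∧ root d = (s.1, s.2 ∪ {C})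
  | .NotR s d => s.1.Finite ∧ s.2.Finite ∧
      ∃ C, form.Not C ∈ s.2 ∧ is_deriv d ∧ root d = ({C} ∪ s.1, s.2)
  | .AllL s d => s.1.Finite ∧ s.2.Finite ∧
      ∃ A a t, fAll a A ∈ s.1 ∧ is_deriv d ∧
        root d = ({FAll_inst t (fAll a A)} ∪ s.1, s.2)
  | .AllR s d => s.1.Finite ∧ s.2.Finite ∧
      ∃ a A, fAll a A ∈ s.2 ∧ a ∉ fvs (s.1 ∪ s.2) ∧ is_deriv d ∧
        root d = (s.1, s.2 ∪ {A})
  | .ExL s d => s.1.Finite ∧ s.2.Finite ∧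
      ∃ a A, fEx a A ∈ s.1 ∧ a ∉ fvs (s.1 ∪ s.2) ∧ is_deriv d ∧
        root d = ({A} ∪ s.1, s.2)
  | .ExR s d => s.1.Finite ∧ s.2.Finite ∧
      ∃ A a t, fEx a A ∈ s.2 ∧ is_deriv d ∧
        root d = (s.1, s.2 ∪ {FEx_inst t (fEx a A)})
  | .WL s d => ∃ Γ Δ A, Γ.Finite ∧ Δ.Finite ∧ is_deriv d ∧ root d = (Γ, Δ) ∧
      s = ({A} ∪ Γ, Δ)
  | .WR s d => ∃ Γ Δ A, Γ.Finite ∧ Δ.Finite ∧ is_deriv d ∧ root d = (Γ, Δ) ∧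
      s = (Γ, Δ ∪ {A})

def derivable (s : Seq) : Prop := ∃ d, is_deriv d ∧ root d = s

def occurs (A : form) : Set pred := pos A ∪ neg A


-- ===== helper lemmas =====

theorem mem_preSuc {n : Nat} : ∀ {l : List Nat}, (n + 1) ∈ l → n ∈ preSuc l
  | [], h => by simp at h
  | 0 :: l, h => by
      simp at h; simpa [preSuc] using mem_preSuc h
  | (m + 1) :: l, h => by
      rcases List.mem_cons.1 h with h | h
      · simp [preSuc]; omega
      · simp [preSuc]; exact Or.inr (mem_preSuc h)

theorem preSuc_mem {n : Nat} : ∀ {l : List Nat}, n ∈ preSuc l → (n + 1) ∈ l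
  | [], h => by simp [preSuc] at h
  | 0 :: l, h => by
      simp [preSuc] at h; exact List.mem_cons_of_mem _ (preSuc_mem h)
  | (m + 1) :: l, h => by
      rcases List.mem_cons.1 h with h | h
      · subst h; exact List.mem_cons_self
      · exact List.mem_cons_of_mem _ (preSuc_mem h)

theorem fsubst_ext : ∀ (A : form) (s s' : var → tm),
    (∀ v ∈ fv A, s v = s' v) → fsubst s A = fsubst s' A
  | .P i tms, s, s', h => by
      simp only [fsubst, form.P.injEq, true_and]
      exact List.map_congr_left h
  | .Bot, _, _, _ => rfl
  | .Top, _, _, _ => rfl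
  | .And A B, s, s', h => by
      simp only [fsubst, form.And.injEq]
      exact ⟨fsubst_ext A s s' (fun v hv => h v (by simp [fv, hv])),
             fsubst_ext B s s' (fun v hv => h v (by simp [fv, hv]))⟩
  | .Or A B, s, s', h => by
      simp only [fsubst, form.Or.injEq]
      exact ⟨fsubst_ext A s s' (fun v hv => h v (by simp [fv, hv])),
             fsubst_ext B s s' (fun v hv => h v (by simp [fv, hv]))⟩
  | .Not A, s, s', h => by
      simp only [fsubst, form.Not.injEq]
      exact fsubst_ext A s s' h
  | .FAll A, s, s', h => by
      simp only [fsubst, form.FAll.injEq]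
      refine fsubst_ext A _ _ ?_
      rintro (_ | v) hv
      · rfl
      · simp only [liftSub]
        rw [h v (mem_preSuc hv)]
  | .FEx A, s, s', h => by
      simp only [fsubst, form.FEx.injEq]
      refine fsubst_ext A _ _ ?_
      rintro (_ | v) hv
      · rfl
      · simp only [liftSub]
        rw [h v (mem_preSuc hv)]

theorem liftSub_comp (s1 s2 : var → tm) :
    liftSub (fun v => s1 (s2 v)) = fun v => liftSub s1 (liftSub s2 v) := by
  funext v; cases v <;> simp [liftSub]

theorem fsubst_comp : ∀ (A : form) (s1 s2 : var → tm),
    fsubst s1 (fsubst s2 A) = fsubst (fun v => s1 (s2 v)) A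
  | .P i tms, s1, s2 => by simp [fsubst, List.map_map]
  | .Bot, _, _ => rfl
  | .Top, _, _ => rfl
  | .And A B, s1, s2 => by simp [fsubst, fsubst_comp A, fsubst_comp B]
  | .Or A B, s1, s2 => by simp [fsubst, fsubst_comp A, fsubst_comp B]
  | .Not A, s1, s2 => by simp [fsubst, fsubst_comp A]
  | .FAll A, s1, s2 => by
      simp [fsubst, fsubst_comp A, liftSub_comp]
  | .FEx A, s1, s2 => by
      simp [fsubst, fsubst_comp A, liftSub_comp]

theorem fsubst_id : ∀ (A : form) (s : var → tm), (∀ v ∈ fv A, s v = v) → fsubst s A = A := by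
  intro A s h
  have : fsubst s A = fsubst (fun v => v) A := fsubst_ext A _ _ h
  rw [this]; clear h this
  have lid : liftSub (fun v => v) = fun v => v := by funext v; cases v <;> simp [liftSub]
  induction A with
  | P i tms => simp [fsubst]
  | Bot => rfl
  | Top => rfl
  | And A B ihA ihB => simp only [fsubst, ihA, ihB]
  | Or A B ihA ihB => simp only [fsubst, ihA, ihB]
  | Not A ihA => simp only [fsubst, ihA]
  | FAll A ihA => simp only [fsubst, lid, ihA]
  | FEx A ihA => simp only [fsubst, lid, ihA]

theorem preSuc_map_liftSub (s : var → tm) : ∀ (l : List Nat),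
    preSuc (l.map (liftSub s)) = (preSuc l).map s
  | [] => rfl
  | 0 :: l => by simp [liftSub, preSuc, preSuc_map_liftSub s l]
  | (n + 1) :: l => by simp [liftSub, preSuc, preSuc_map_liftSub s l]

theorem fv_fsubst : ∀ (A : form) (s : var → tm), fv (fsubst s A) = (fv A).map s
  | .P i tms, s => rfl
  | .Bot, _ => rfl
  | .Top, _ => rfl
  | .And A B, s => by simp [fsubst, fv, fv_fsubst A, fv_fsubst B]
  | .Or A B, s => by simp [fsubst, fv, fv_fsubst A, fv_fsubst B]
  | .Not A, s => by simp [fsubst, fv, fv_fsubst A]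
  | .FAll A, s => by simp [fsubst, fv, fv_fsubst A, preSuc_map_liftSub]
  | .FEx A, s => by simp [fsubst, fv, fv_fsubst A, preSuc_map_liftSub]

theorem posneg_fsubst : ∀ (A : form) (s : var → tm), posneg (fsubst s A) = posneg A
  | .P i tms, s => rfl
  | .Bot, _ => rfl
  | .Top, _ => rfl
  | .And A B, s => by simp [fsubst, posneg, posneg_fsubst A, posneg_fsubst B]
  | .Or A B, s => by simp [fsubst, posneg, posneg_fsubst A, posneg_fsubst B]
  | .Not A, s => by simp [fsubst, posneg, posneg_fsubst A]
  | .FAll A, s => by simp [fsubst, posneg, posneg_fsubst A]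
  | .FEx A, s => by simp [fsubst, posneg, posneg_fsubst A]

theorem occurs_fsubst (A : form) (s : var → tm) : occurs (fsubst s A) = occurs A := by
  simp [occurs, pos, neg, posneg_fsubst]


theorem root_finite : ∀ d : Deriv, is_deriv d → (root d).1.Finite ∧ (root d).2.Finite := by
  intro d hd
  cases d with
  | Init s => exact ⟨hd.1, hd.2.1⟩
  | BotL s => exact ⟨hd.1, hd.2.1⟩
  | TopR s => exact ⟨hd.1, hd.2.1⟩
  | AndL s d => exact ⟨hd.1, hd.2.1⟩
  | AndR s dl dr => exact ⟨hd.1, hd.2.1⟩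
  | OrL s dl dr => exact ⟨hd.1, hd.2.1⟩
  | OrR s d => exact ⟨hd.1, hd.2.1⟩
  | NotL s d => exact ⟨hd.1, hd.2.1⟩
  | NotR s d => exact ⟨hd.1, hd.2.1⟩
  | AllL s d => exact ⟨hd.1, hd.2.1⟩
  | AllR s d => exact ⟨hd.1, hd.2.1⟩
  | ExL s d => exact ⟨hd.1, hd.2.1⟩
  | ExR s d => exact ⟨hd.1, hd.2.1⟩
  | WL s d =>
      obtain ⟨Γ, Δ, A, hΓ, hΔ, _, _, hs⟩ := hd
      rw [hs]; exact ⟨(Set.finite_singleton A).union hΓ, hΔ⟩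
  | WR s d =>
      obtain ⟨Γ, Δ, A, hΓ, hΔ, _, _, hs⟩ := hd
      rw [hs]; exact ⟨hΓ, hΔ.union (Set.finite_singleton A)⟩

theorem derivable_finite {Γ Δ : Set form} (h : derivable (Γ, Δ)) : Γ.Finite ∧ Δ.Finite := by
  obtain ⟨d, hd, hr⟩ := h
  have := root_finite d hd
  rw [hr] at this; exact this

section Rules
variable {Γ Δ : Set form} {A B C : form}

theorem derivable_Init (hΓ : Γ.Finite) (hΔ : Δ.Finite) (h1 : A ∈ Γ) (h2 : A ∈ Δ) :
    derivable (Γ, Δ) :=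
  ⟨.Init (Γ, Δ), ⟨hΓ, hΔ, A, h1, h2⟩, rfl⟩

theorem derivable_BotL (hΓ : Γ.Finite) (hΔ : Δ.Finite) (h : form.Bot ∈ Γ) :
    derivable (Γ, Δ) :=
  ⟨.BotL (Γ, Δ), ⟨hΓ, hΔ, h⟩, rfl⟩

theorem derivable_TopR (hΓ : Γ.Finite) (hΔ : Δ.Finite) (h : form.Top ∈ Δ) :
    derivable (Γ, Δ) :=
  ⟨.TopR (Γ, Δ), ⟨hΓ, hΔ, h⟩, rfl⟩

theorem derivable_AndL (hΓ : Γ.Finite) (hΔ : Δ.Finite) (h : form.And A B ∈ Γ)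
    (hp : derivable ({A, B} ∪ Γ, Δ)) : derivable (Γ, Δ) := by
  obtain ⟨d, hd, hr⟩ := hp
  exact ⟨.AndL (Γ, Δ) d, ⟨hΓ, hΔ, A, B, h, hd, hr⟩, rfl⟩

theorem derivable_AndR (hΓ : Γ.Finite) (hΔ : Δ.Finite) (h : form.And A B ∈ Δ)
    (hl : derivable (Γ, Δ ∪ {A})) (hr : derivable (Γ, Δ ∪ {B})) : derivable (Γ, Δ) := by
  obtain ⟨dl, hdl, hrl⟩ := hl
  obtain ⟨dr, hdr, hrr⟩ := hr
  exact ⟨.AndR (Γ, Δ) dl dr, ⟨hΓ, hΔ, A, B, h, hdl, hrl, hdr, hrr⟩, rfl⟩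

theorem derivable_OrL (hΓ : Γ.Finite) (hΔ : Δ.Finite) (h : form.Or A B ∈ Γ)
    (hl : derivable ({A} ∪ Γ, Δ)) (hr : derivable ({B} ∪ Γ, Δ)) : derivable (Γ, Δ) := by
  obtain ⟨dl, hdl, hrl⟩ := hl
  obtain ⟨dr, hdr, hrr⟩ := hr
  exact ⟨.OrL (Γ, Δ) dl dr, ⟨hΓ, hΔ, A, B, h, hdl, hrl, hdr, hrr⟩, rfl⟩

theorem derivable_OrR (hΓ : Γ.Finite) (hΔ : Δ.Finite) (h : form.Or A B ∈ Δ)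
    (hp : derivable (Γ, Δ ∪ {A, B})) : derivable (Γ, Δ) := by
  obtain ⟨d, hd, hr⟩ := hp
  exact ⟨.OrR (Γ, Δ) d, ⟨hΓ, hΔ, A, B, h, hd, hr⟩, rfl⟩

theorem derivable_NotL (hΓ : Γ.Finite) (hΔ : Δ.Finite) (h : form.Not C ∈ Γ)
    (hp : derivable (Γ, Δ ∪ {C})) : derivable (Γ, Δ) := by
  obtain ⟨d, hd, hr⟩ := hp
  exact ⟨.NotL (Γ, Δ) d, ⟨hΓ, hΔ, C, h, hd, hr⟩, rfl⟩

theorem derivable_NotR (hΓ : Γ.Finite) (hΔ : Δ.Finite) (h : form.Not C ∈ Δ)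
    (hp : derivable ({C} ∪ Γ, Δ)) : derivable (Γ, Δ) := by
  obtain ⟨d, hd, hr⟩ := hp
  exact ⟨.NotR (Γ, Δ) d, ⟨hΓ, hΔ, C, h, hd, hr⟩, rfl⟩

theorem derivable_AllL {a : var} {t : tm} (hΓ : Γ.Finite) (hΔ : Δ.Finite) (h : fAll a A ∈ Γ)
    (hp : derivable ({FAll_inst t (fAll a A)} ∪ Γ, Δ)) : derivable (Γ, Δ) := by
  obtain ⟨d, hd, hr⟩ := hp
  exact ⟨.AllL (Γ, Δ) d, ⟨hΓ, hΔ, A, a, t, h, hd, hr⟩, rfl⟩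

theorem derivable_AllR {a : var} (hΓ : Γ.Finite) (hΔ : Δ.Finite) (h : fAll a A ∈ Δ)
    (hfr : a ∉ fvs (Γ ∪ Δ)) (hp : derivable (Γ, Δ ∪ {A})) : derivable (Γ, Δ) := by
  obtain ⟨d, hd, hr⟩ := hp
  exact ⟨.AllR (Γ, Δ) d, ⟨hΓ, hΔ, a, A, h, hfr, hd, hr⟩, rfl⟩

theorem derivable_ExL {a : var} (hΓ : Γ.Finite) (hΔ : Δ.Finite) (h : fEx a A ∈ Γ)
    (hfr : a ∉ fvs (Γ ∪ Δ)) (hp : derivable ({A} ∪ Γ, Δ)) : derivable (Γ, Δ) := by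
  obtain ⟨d, hd, hr⟩ := hp
  exact ⟨.ExL (Γ, Δ) d, ⟨hΓ, hΔ, a, A, h, hfr, hd, hr⟩, rfl⟩

theorem derivable_ExR {a : var} {t : tm} (hΓ : Γ.Finite) (hΔ : Δ.Finite) (h : fEx a A ∈ Δ)
    (hp : derivable (Γ, Δ ∪ {FEx_inst t (fEx a A)})) : derivable (Γ, Δ) := by
  obtain ⟨d, hd, hr⟩ := hp
  exact ⟨.ExR (Γ, Δ) d, ⟨hΓ, hΔ, A, a, t, h, hd, hr⟩, rfl⟩

theorem derivable_WL (hp : derivable (Γ, Δ)) : derivable ({A} ∪ Γ, Δ) := by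
  obtain ⟨hΓ, hΔ⟩ := derivable_finite hp
  obtain ⟨d, hd, hr⟩ := hp
  exact ⟨.WL ({A} ∪ Γ, Δ) d, ⟨Γ, Δ, A, hΓ, hΔ, hd, hr, rfl⟩, rfl⟩

theorem derivable_WR (hp : derivable (Γ, Δ)) : derivable (Γ, Δ ∪ {A}) := by
  obtain ⟨hΓ, hΔ⟩ := derivable_finite hp
  obtain ⟨d, hd, hr⟩ := hp
  exact ⟨.WR (Γ, Δ ∪ {A}) d, ⟨Γ, Δ, A, hΓ, hΔ, hd, hr, rfl⟩, rfl⟩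

end Rules

theorem derivable_weaken {Γ Δ Γ' Δ' : Set form} (hp : derivable (Γ, Δ))
    (hΓ : Γ ⊆ Γ') (hΔ : Δ ⊆ Δ') (hΓ' : Γ'.Finite) (hΔ' : Δ'.Finite) :
    derivable (Γ', Δ') := by
  have stepL : ∀ S : Set form, S.Finite → ∀ X Y : Set form, derivable (X, Y) →
      derivable (S ∪ X, Y) := by
    intro S hS X Y h
    refine Set.Finite.induction_on (motive := fun S _ => derivable (S ∪ X, Y)) _ hS ?_ ?_
    · simpa using h
    · intro a s _ _ ih
      rw [Set.insert_union, ← Set.singleton_union]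
      exact derivable_WL ih
  have stepR : ∀ S : Set form, S.Finite → ∀ X Y : Set form, derivable (X, Y) →
      derivable (X, Y ∪ S) := by
    intro S hS X Y h
    refine Set.Finite.induction_on (motive := fun S _ => derivable (X, Y ∪ S)) _ hS ?_ ?_
    · simpa using h
    · intro a s _ _ ih
      rw [Set.union_insert, ← Set.union_singleton]
      exact derivable_WR ih
  have h1 : derivable (Γ' ∪ Γ, Δ) := stepL Γ' hΓ' _ _ hp
  rw [Set.union_eq_self_of_subset_right hΓ] at h1
  have h2 : derivable (Γ', Δ ∪ Δ') := stepR Δ' hΔ' _ _ h1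
  rwa [Set.union_eq_self_of_subset_left hΔ] at h2

theorem derivable_eq {Γ Δ Γ' Δ' : Set form} (hp : derivable (Γ, Δ))
    (h1 : Γ = Γ') (h2 : Δ = Δ') : derivable (Γ', Δ') := h1 ▸ h2 ▸ hp

def eval : form → Bool
  | .P _ _ => true
  | .Bot => false
  | .Top => true
  | .And A B => eval A && eval B
  | .Or A B => eval A || eval B
  | .Not A => !eval A
  | .FAll A => eval A
  | .FEx A => eval A

theorem le_foldr_max : ∀ (l : List Nat), ∀ n ∈ l, n ≤ l.foldr max 0
  | [], _, h => by simp at h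
  | m :: l, n, h => by
      rcases List.mem_cons.1 h with h | h
      · subst h; exact le_max_left _ _
      · exact le_trans (le_foldr_max l n h) (le_max_right _ _)

theorem exists_fresh (l : List Nat) : ∃ a, a + 1 ∉ l :=
  ⟨l.foldr max 0, fun h => by have := le_foldr_max l _ h; omega⟩

theorem inst_subst (a : var) (B : form) :
    fsubst (fun v => match v with | 0 => a | n + 1 => n)
      (fsubst (fun v => if v = a then 0 else v + 1) B) = B := by
  rw [fsubst_comp]
  apply fsubst_id
  intro v _
  by_cases hv : v = a <;> simp [hv]

theorem fresh_subst (s : var → tm) (A : form) :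
    ∃ (a : var) (u : var → tm),
      fsubst (fun v => if v = a then 0 else v + 1) (fsubst u A) = fsubst (liftSub s) A ∧
      a + 1 ∉ (fv A).map (liftSub s) := by
  obtain ⟨a, ha⟩ := exists_fresh ((fv A).map (liftSub s))
  refine ⟨a, fun v => match liftSub s v with | 0 => a | n + 1 => n, ?_, ha⟩
  rw [fsubst_comp]
  apply fsubst_ext
  intro v hv
  rcases hl : liftSub s v with _ | n
  · simp
  · have hna : n ≠ a := by
      intro h
      subst h
      exact ha (hl ▸ List.mem_map_of_mem (f := liftSub s) hv)
    simp [hl, hna]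

theorem mem_fvs {a : var} {S : Set form} : a ∈ fvs S ↔ ∃ A ∈ S, a ∈ fv A := by
  simp [fvs]

theorem eval_derivable : ∀ (A : form), occurs A = ∅ → ∀ s : var → tm,
    (eval A = true → derivable (∅, {fsubst s A})) ∧
    (eval A = false → derivable ({fsubst s A}, ∅)) := by
  have finsing : ∀ B : form, ({B} : Set form).Finite := fun B => Set.finite_singleton B
  intro A
  induction A with
  | P i tms =>
      intro h
      exfalso
      have : i ∈ occurs (form.P i tms) := by simp [occurs, pos, posneg]
      rw [h] at this
      exact this
  | Bot =>
      intro _ s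
      refine ⟨by simp [eval], fun _ => ?_⟩
      exact derivable_BotL (finsing _) (Set.finite_empty) (by simp [fsubst])
  | Top =>
      intro _ s
      refine ⟨fun _ => ?_, by simp [eval]⟩
      exact derivable_TopR (Set.finite_empty) (finsing _) (by simp [fsubst])
  | And A B ihA ihB =>
      intro h s
      have hA : occurs A = ∅ := by
        rw [Set.eq_empty_iff_forall_notMem] at h ⊢
        intro p hp
        exact h p (by revert hp; simp [occurs, pos, neg, posneg]; tauto)
      have hB : occurs B = ∅ := by
        rw [Set.eq_empty_iff_forall_notMem] at h ⊢
        intro p hp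
        exact h p (by revert hp; simp [occurs, pos, neg, posneg]; tauto)
      constructor
      · intro he
        simp only [eval, Bool.and_eq_true] at he
        show derivable (∅, {form.And (fsubst s A) (fsubst s B)})
        refine derivable_AndR Set.finite_empty (finsing _) rfl ?_ ?_
        · exact derivable_weaken ((ihA hA s).1 he.1) (by simp) (by simp)
            Set.finite_empty ((finsing _).union (finsing _))
        · exact derivable_weaken ((ihB hB s).1 he.2) (by simp) (by simp)
            Set.finite_empty ((finsing _).union (finsing _))
      · intro he
        simp only [eval, Bool.and_eq_false_iff] at he
        show derivable ({form.And (fsubst s A) (fsubst s B)}, ∅)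
        refine derivable_AndL (finsing _) Set.finite_empty rfl ?_
        rcases he with he | he
        · exact derivable_weaken ((ihA hA s).2 he) (by simp) (by simp)
            (((Set.finite_singleton _).insert _).union (finsing _)) Set.finite_empty
        · exact derivable_weaken ((ihB hB s).2 he) (by simp) (by simp)
            (((Set.finite_singleton _).insert _).union (finsing _)) Set.finite_empty
  | Or A B ihA ihB =>
      intro h s
      have hA : occurs A = ∅ := by
        rw [Set.eq_empty_iff_forall_notMem] at h ⊢
        intro p hp
        exact h p (by revert hp; simp [occurs, pos, neg, posneg]; tauto)
      have hB : occurs B = ∅ := by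
        rw [Set.eq_empty_iff_forall_notMem] at h ⊢
        intro p hp
        exact h p (by revert hp; simp [occurs, pos, neg, posneg]; tauto)
      constructor
      · intro he
        simp only [eval, Bool.or_eq_true] at he
        show derivable (∅, {form.Or (fsubst s A) (fsubst s B)})
        refine derivable_OrR Set.finite_empty (finsing _) rfl ?_
        rcases he with he | he
        · exact derivable_weaken ((ihA hA s).1 he) (by simp) (by simp)
            Set.finite_empty ((finsing _).union ((Set.finite_singleton _).insert _))
        · exact derivable_weaken ((ihB hB s).1 he) (by simp) (by simp)
            Set.finite_empty ((finsing _).union ((Set.finite_singleton _).insert _))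
      · intro he
        simp only [eval, Bool.or_eq_false_iff] at he
        show derivable ({form.Or (fsubst s A) (fsubst s B)}, ∅)
        refine derivable_OrL (finsing _) Set.finite_empty rfl ?_ ?_
        · exact derivable_weaken ((ihA hA s).2 he.1) (by simp) (by simp)
            ((finsing _).union (finsing _)) Set.finite_empty
        · exact derivable_weaken ((ihB hB s).2 he.2) (by simp) (by simp)
            ((finsing _).union (finsing _)) Set.finite_empty
  | Not A ihA =>
      intro h s
      have hA : occurs A = ∅ := by
        rw [Set.eq_empty_iff_forall_notMem] at h ⊢
        intro p hp
        exact h p (by revert hp; simp [occurs, pos, neg, posneg]; tauto)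
      constructor
      · intro he
        simp only [eval, Bool.not_eq_true'] at he
        show derivable (∅, {form.Not (fsubst s A)})
        refine derivable_NotR Set.finite_empty (finsing _) rfl ?_
        exact derivable_weaken ((ihA hA s).2 he) (by simp) (by simp)
          ((finsing _).union Set.finite_empty) (finsing _)
      · intro he
        simp only [eval, Bool.not_eq_false'] at he
        show derivable ({form.Not (fsubst s A)}, ∅)
        refine derivable_NotL (finsing _) Set.finite_empty rfl ?_
        exact derivable_weaken ((ihA hA s).1 he) (by simp) (by simp)
          (finsing _) (Set.finite_empty.union (finsing _))
  | FAll A ihA =>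
      intro h s
      have hA : occurs A = ∅ := by simpa [occurs, pos, neg, posneg] using h
      obtain ⟨a, u, hkey, hfr⟩ := fresh_subst s A
      have keyF : form.FAll (fsubst (liftSub s) A) = fAll a (fsubst u A) := by
        unfold fAll; rw [hkey]
      have hnotfv : a ∉ fv (form.FAll (fsubst (liftSub s) A)) := by
        intro hmem
        simp only [fv, fv_fsubst] at hmem
        exact hfr (preSuc_mem hmem)
      constructor
      · intro he
        simp only [eval] at he
        show derivable (∅, {form.FAll (fsubst (liftSub s) A)})
        refine derivable_AllR (a := a) (A := fsubst u A) Set.finite_empty (finsing _)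
          (by rw [← keyF]; simp) ?_ ?_
        · rw [mem_fvs]
          rintro ⟨B, hB, haB⟩
          simp at hB
          subst hB
          exact hnotfv haB
        · exact derivable_weaken ((ihA hA u).1 he) (by simp) (by simp)
            Set.finite_empty ((finsing _).union (finsing _))
      · intro he
        simp only [eval] at he
        show derivable ({form.FAll (fsubst (liftSub s) A)}, ∅)
        refine derivable_AllL (a := a) (A := fsubst u A) (t := a) (finsing _)
          Set.finite_empty (by rw [← keyF]; simp) ?_
        have hinst : FAll_inst a (fAll a (fsubst u A)) = fsubst u A := by
          unfold fAll FAll_inst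
          exact inst_subst a (fsubst u A)
        rw [hinst]
        exact derivable_weaken ((ihA hA u).2 he) (by simp) (by simp)
          ((finsing _).union (finsing _)) Set.finite_empty
  | FEx A ihA =>
      intro h s
      have hA : occurs A = ∅ := by simpa [occurs, pos, neg, posneg] using h
      obtain ⟨a, u, hkey, hfr⟩ := fresh_subst s A
      have keyF : form.FEx (fsubst (liftSub s) A) = fEx a (fsubst u A) := by
        unfold fEx; rw [hkey]
      have hnotfv : a ∉ fv (form.FEx (fsubst (liftSub s) A)) := by
        intro hmem
        simp only [fv, fv_fsubst] at hmem
        exact hfr (preSuc_mem hmem)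
      constructor
      · intro he
        simp only [eval] at he
        show derivable (∅, {form.FEx (fsubst (liftSub s) A)})
        refine derivable_ExR (a := a) (A := fsubst u A) (t := a) Set.finite_empty (finsing _)
          (by rw [← keyF]; simp) ?_
        have hinst : FEx_inst a (fEx a (fsubst u A)) = fsubst u A := by
          unfold fEx FEx_inst
          exact inst_subst a (fsubst u A)
        rw [hinst]
        exact derivable_weaken ((ihA hA u).1 he) (by simp) (by simp)
          Set.finite_empty ((finsing _).union (finsing _))
      · intro he
        simp only [eval] at he
        show derivable ({form.FEx (fsubst (liftSub s) A)}, ∅)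
        refine derivable_ExL (a := a) (A := fsubst u A) (finsing _) Set.finite_empty
          (by rw [← keyF]; simp) ?_ ?_
        · rw [mem_fvs]
          rintro ⟨B, hB, haB⟩
          simp at hB
          subst hB
          exact hnotfv haB
        · exact derivable_weaken ((ihA hA u).2 he) (by simp) (by simp)
            ((finsing _).union (finsing _)) Set.finite_empty

theorem pf_derivable (A : form) (h : occurs A = ∅) :
    derivable ({A}, (∅ : Set form)) ∨ derivable ((∅ : Set form), {A}) := by
  have hid : fsubst (fun v => v) A = A := fsubst_id A _ (fun _ _ => rfl)
  rcases he : eval A with _ | _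
  · exact Or.inl (by have := (eval_derivable A h (fun v => v)).2 he; rwa [hid] at this)
  · exact Or.inr (by have := (eval_derivable A h (fun v => v)).1 he; rwa [hid] at this)

-- occurs lemmas
theorem occurs_And_left {A B : form} : occurs A ⊆ occurs (form.And A B) := by
  intro p hp; simp [occurs, pos, neg, posneg] at *; tauto
theorem occurs_And_right {A B : form} : occurs B ⊆ occurs (form.And A B) := by
  intro p hp; simp [occurs, pos, neg, posneg] at *; tauto
theorem occurs_Or_left {A B : form} : occurs A ⊆ occurs (form.Or A B) := by
  intro p hp; simp [occurs, pos, neg, posneg] at *; tauto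
theorem occurs_Or_right {A B : form} : occurs B ⊆ occurs (form.Or A B) := by
  intro p hp; simp [occurs, pos, neg, posneg] at *; tauto
theorem occurs_Not {A : form} : occurs (form.Not A) = occurs A := by
  simp [occurs, pos, neg, posneg, Set.union_comm]
theorem occurs_fAll (a : var) (A : form) : occurs (fAll a A) = occurs A := by
  simp [fAll, occurs, pos, neg, posneg, posneg_fsubst]
theorem occurs_fEx (a : var) (A : form) : occurs (fEx a A) = occurs A := by
  simp [fEx, occurs, pos, neg, posneg, posneg_fsubst]
theorem occurs_FAll_inst (t : tm) (a : var) (A : form) :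
    occurs (FAll_inst t (fAll a A)) = occurs A := by
  simp [fAll, FAll_inst, occurs_fsubst]
theorem occurs_FEx_inst (t : tm) (a : var) (A : form) :
    occurs (FEx_inst t (fEx a A)) = occurs A := by
  simp [fEx, FEx_inst, occurs_fsubst]

theorem fvs_mono {S T : Set form} (h : S ⊆ T) : fvs S ⊆ fvs T := by
  intro a ha
  rw [mem_fvs] at ha ⊢
  obtain ⟨A, hA, haA⟩ := ha
  exact ⟨A, h hA, haA⟩

def SepCond (Γ₁ Δ₁ Γ₂ Δ₂ : Set form) : Prop :=
  ∀ p A B, (A ∈ Γ₁ ∨ A ∈ Δ₁) → (B ∈ Γ₂ ∨ B ∈ Δ₂) → p ∈ occurs A → p ∈ occurs B → False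

theorem sep_symm {Γ₁ Δ₁ Γ₂ Δ₂ : Set form} (h : SepCond Γ₁ Δ₁ Γ₂ Δ₂) :
    SepCond Γ₂ Δ₂ Γ₁ Δ₁ :=
  fun p A B hA hB hpA hpB => h p B A hB hA hpB hpA

theorem sep_mono {Γ₁ Δ₁ Γ₂ Δ₂ Γ₁' Δ₁' Γ₂' Δ₂' : Set form} (h : SepCond Γ₁ Δ₁ Γ₂ Δ₂)
    (h1 : Γ₁' ⊆ Γ₁) (h2 : Δ₁' ⊆ Δ₁) (h3 : Γ₂' ⊆ Γ₂) (h4 : Δ₂' ⊆ Δ₂) :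
    SepCond Γ₁' Δ₁' Γ₂' Δ₂' := by
  intro p A B hA hB hpA hpB
  exact h p A B (hA.imp (@h1 A) (@h2 A)) (hB.imp (@h3 B) (@h4 B)) hpA hpB

theorem sep_addL {Γ₁ Δ₁ Γ₂ Δ₂ S : Set form} (h : SepCond Γ₁ Δ₁ Γ₂ Δ₂)
    (hS : ∀ C ∈ S, ∃ D, (D ∈ Γ₁ ∨ D ∈ Δ₁) ∧ occurs C ⊆ occurs D) :
    SepCond (S ∪ Γ₁) Δ₁ Γ₂ Δ₂ := by
  intro p A B hA hB hpA hpB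
  rcases hA with (hA | hA) | hA
  · obtain ⟨D, hD, hsub⟩ := hS A hA
    exact h p D B hD hB (hsub hpA) hpB
  · exact h p A B (Or.inl hA) hB hpA hpB
  · exact h p A B (Or.inr hA) hB hpA hpB

theorem sep_addR {Γ₁ Δ₁ Γ₂ Δ₂ S : Set form} (h : SepCond Γ₁ Δ₁ Γ₂ Δ₂)
    (hS : ∀ C ∈ S, ∃ D, (D ∈ Γ₁ ∨ D ∈ Δ₁) ∧ occurs C ⊆ occurs D) :
    SepCond Γ₁ (Δ₁ ∪ S) Γ₂ Δ₂ := by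
  intro p A B hA hB hpA hpB
  rcases hA with hA | (hA | hA)
  · exact h p A B (Or.inl hA) hB hpA hpB
  · exact h p A B (Or.inr hA) hB hpA hpB
  · obtain ⟨D, hD, hsub⟩ := hS A hA
    exact h p D B hD hB (hsub hpA) hpB

theorem seq_eq {a b c d : Set form} (h1 : a = c) (h2 : b = d) :
    ((a, b) : Seq) = (c, d) := by rw [h1, h2]

theorem uA1 (S X Y : Set form) : S ∪ (X ∪ Y) = (S ∪ X) ∪ Y := (Set.union_assoc S X Y).symm
theorem uA2 (S X Y : Set form) : S ∪ (X ∪ Y) = (S ∪ Y) ∪ X := by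
  ext x; simp only [Set.mem_union]; tauto
theorem uC (X Y : Set form) : X ∪ Y = Y ∪ X := Set.union_comm X Y
theorem uB1 (S X Y : Set form) : (X ∪ Y) ∪ S = (X ∪ S) ∪ Y := by
  ext x; simp only [Set.mem_union]; tauto
theorem uB2 (S X Y : Set form) : (X ∪ Y) ∪ S = (Y ∪ S) ∪ X := by
  ext x; simp only [Set.mem_union]; tauto

set_option maxHeartbeats 1000000 in
theorem split : ∀ (d : Deriv), is_deriv d → ∀ Γ₁ Γ₂ Δ₁ Δ₂ : Set form,
    root d = (Γ₁ ∪ Γ₂, Δ₁ ∪ Δ₂) → SepCond Γ₁ Δ₁ Γ₂ Δ₂ →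
    derivable (Γ₁, Δ₁) ∨ derivable (Γ₂, Δ₂) := by
  intro d
  induction d with
  | Init s =>
      intro hd Γ₁ Γ₂ Δ₁ Δ₂ hr hsep
      simp only [root] at hr; subst hr
      obtain ⟨hfΓ, hfΔ, A, hA, hA'⟩ := hd
      have hΓ1 : Γ₁.Finite := hfΓ.subset Set.subset_union_left
      have hΓ2 : Γ₂.Finite := hfΓ.subset Set.subset_union_right
      have hΔ1 : Δ₁.Finite := hfΔ.subset Set.subset_union_left
      have hΔ2 : Δ₂.Finite := hfΔ.subset Set.subset_union_right
      rcases hA with hA | hA <;> rcases hA' with hA' | hA'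
      · exact Or.inl (derivable_Init hΓ1 hΔ1 hA hA')
      · have hocc : occurs A = ∅ := Set.eq_empty_iff_forall_notMem.2
          (fun p hp => hsep p A A (Or.inl hA) (Or.inr hA') hp hp)
        rcases pf_derivable A hocc with h | h
        · exact Or.inl (derivable_weaken h (Set.singleton_subset_iff.2 hA)
            (Set.empty_subset _) hΓ1 hΔ1)
        · exact Or.inr (derivable_weaken h (Set.empty_subset _)
            (Set.singleton_subset_iff.2 hA') hΓ2 hΔ2)
      · have hocc : occurs A = ∅ := Set.eq_empty_iff_forall_notMem.2
          (fun p hp => hsep p A A (Or.inr hA') (Or.inl hA) hp hp)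
        rcases pf_derivable A hocc with h | h
        · exact Or.inr (derivable_weaken h (Set.singleton_subset_iff.2 hA)
            (Set.empty_subset _) hΓ2 hΔ2)
        · exact Or.inl (derivable_weaken h (Set.empty_subset _)
            (Set.singleton_subset_iff.2 hA') hΓ1 hΔ1)
      · exact Or.inr (derivable_Init hΓ2 hΔ2 hA hA')
  | BotL s =>
      intro hd Γ₁ Γ₂ Δ₁ Δ₂ hr hsep
      simp only [root] at hr; subst hr
      obtain ⟨hfΓ, hfΔ, hB⟩ := hd
      have hΓ1 : Γ₁.Finite := hfΓ.subset Set.subset_union_left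
      have hΓ2 : Γ₂.Finite := hfΓ.subset Set.subset_union_right
      have hΔ1 : Δ₁.Finite := hfΔ.subset Set.subset_union_left
      have hΔ2 : Δ₂.Finite := hfΔ.subset Set.subset_union_right
      rcases hB with hB | hB
      · exact Or.inl (derivable_BotL hΓ1 hΔ1 hB)
      · exact Or.inr (derivable_BotL hΓ2 hΔ2 hB)
  | TopR s =>
      intro hd Γ₁ Γ₂ Δ₁ Δ₂ hr hsep
      simp only [root] at hr; subst hr
      obtain ⟨hfΓ, hfΔ, hB⟩ := hd
      have hΓ1 : Γ₁.Finite := hfΓ.subset Set.subset_union_left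
      have hΓ2 : Γ₂.Finite := hfΓ.subset Set.subset_union_right
      have hΔ1 : Δ₁.Finite := hfΔ.subset Set.subset_union_left
      have hΔ2 : Δ₂.Finite := hfΔ.subset Set.subset_union_right
      rcases hB with hB | hB
      · exact Or.inl (derivable_TopR hΓ1 hΔ1 hB)
      · exact Or.inr (derivable_TopR hΓ2 hΔ2 hB)
  | AndL s d ih =>
      intro hd Γ₁ Γ₂ Δ₁ Δ₂ hr hsep
      simp only [root] at hr; subst hr
      obtain ⟨hfΓ, hfΔ, A, B, hmem, hdp, hroot⟩ := hd
      have hΓ1 : Γ₁.Finite := hfΓ.subset Set.subset_union_left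
      have hΓ2 : Γ₂.Finite := hfΓ.subset Set.subset_union_right
      have hΔ1 : Δ₁.Finite := hfΔ.subset Set.subset_union_left
      have hΔ2 : Δ₂.Finite := hfΔ.subset Set.subset_union_right
      rcases hmem with h1 | h2
      · have hnew : ∀ E ∈ ({A, B} : Set form), ∃ D, (D ∈ Γ₁ ∨ D ∈ Δ₁) ∧ occurs E ⊆ occurs D :=
          by
          intro E hE
          refine ⟨form.And A B, Or.inl h1, ?_⟩
          simp only [Set.mem_insert_iff, Set.mem_singleton_iff] at hE
          rcases hE with rfl | rfl
          · exact occurs_And_left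
          · exact occurs_And_right
        rcases ih hdp ({A, B} ∪ Γ₁) Γ₂ Δ₁ Δ₂ (hroot.trans (seq_eq (uA1 _ _ _) rfl)) (sep_addL hsep hnew) with hL | hR
        · exact Or.inl (derivable_AndL hΓ1 hΔ1 h1 hL)
        · exact Or.inr hR
      · have hnew : ∀ E ∈ ({A, B} : Set form), ∃ D, (D ∈ Γ₂ ∨ D ∈ Δ₂) ∧ occurs E ⊆ occurs D :=
          by
          intro E hE
          refine ⟨form.And A B, Or.inl h2, ?_⟩
          simp only [Set.mem_insert_iff, Set.mem_singleton_iff] at hE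
          rcases hE with rfl | rfl
          · exact occurs_And_left
          · exact occurs_And_right
        rcases ih hdp ({A, B} ∪ Γ₂) Γ₁ Δ₂ Δ₁ (hroot.trans (seq_eq (uA2 _ _ _) (uC _ _))) (sep_addL (sep_symm hsep) hnew) with hL | hR
        · exact Or.inr (derivable_AndL hΓ2 hΔ2 h2 hL)
        · exact Or.inl hR
  | AndR s dl dr ihl ihr =>
      intro hd Γ₁ Γ₂ Δ₁ Δ₂ hr hsep
      simp only [root] at hr; subst hr
      obtain ⟨hfΓ, hfΔ, A, B, hmem, hdl, hrl, hdr, hrr⟩ := hd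
      have hΓ1 : Γ₁.Finite := hfΓ.subset Set.subset_union_left
      have hΓ2 : Γ₂.Finite := hfΓ.subset Set.subset_union_right
      have hΔ1 : Δ₁.Finite := hfΔ.subset Set.subset_union_left
      have hΔ2 : Δ₂.Finite := hfΔ.subset Set.subset_union_right
      rcases hmem with h1 | h2
      · have hnewA : ∀ E ∈ ({A} : Set form), ∃ D, (D ∈ Γ₁ ∨ D ∈ Δ₁) ∧ occurs E ⊆ occurs D :=
          fun E hE => ⟨form.And A B, Or.inr h1, by
            simp only [Set.mem_singleton_iff] at hE; subst hE; exact occurs_And_left⟩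
        have hnewB : ∀ E ∈ ({B} : Set form), ∃ D, (D ∈ Γ₁ ∨ D ∈ Δ₁) ∧ occurs E ⊆ occurs D :=
          fun E hE => ⟨form.And A B, Or.inr h1, by
            simp only [Set.mem_singleton_iff] at hE; subst hE; exact occurs_And_right⟩
        rcases ihl hdl Γ₁ Γ₂ (Δ₁ ∪ {A}) Δ₂ (hrl.trans (seq_eq rfl (uB1 _ _ _))) (sep_addR hsep hnewA) with hLl | hR
        · rcases ihr hdr Γ₁ Γ₂ (Δ₁ ∪ {B}) Δ₂ (hrr.trans (seq_eq rfl (uB1 _ _ _))) (sep_addR hsep hnewB) with hLr | hR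
          · exact Or.inl (derivable_AndR hΓ1 hΔ1 h1 hLl hLr)
          · exact Or.inr hR
        · exact Or.inr hR
      · have hnewA : ∀ E ∈ ({A} : Set form), ∃ D, (D ∈ Γ₂ ∨ D ∈ Δ₂) ∧ occurs E ⊆ occurs D :=
          fun E hE => ⟨form.And A B, Or.inr h2, by
            simp only [Set.mem_singleton_iff] at hE; subst hE; exact occurs_And_left⟩
        have hnewB : ∀ E ∈ ({B} : Set form), ∃ D, (D ∈ Γ₂ ∨ D ∈ Δ₂) ∧ occurs E ⊆ occurs D :=
          fun E hE => ⟨form.And A B, Or.inr h2, by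
            simp only [Set.mem_singleton_iff] at hE; subst hE; exact occurs_And_right⟩
        rcases ihl hdl Γ₂ Γ₁ (Δ₂ ∪ {A}) Δ₁ (hrl.trans (seq_eq (uC _ _) (uB2 _ _ _))) (sep_addR (sep_symm hsep) hnewA) with hLl | hR
        · rcases ihr hdr Γ₂ Γ₁ (Δ₂ ∪ {B}) Δ₁ (hrr.trans (seq_eq (uC _ _) (uB2 _ _ _))) (sep_addR (sep_symm hsep) hnewB) with hLr | hR
          · exact Or.inr (derivable_AndR hΓ2 hΔ2 h2 hLl hLr)
          · exact Or.inl hR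
        · exact Or.inl hR
  | OrL s dl dr ihl ihr =>
      intro hd Γ₁ Γ₂ Δ₁ Δ₂ hr hsep
      simp only [root] at hr; subst hr
      obtain ⟨hfΓ, hfΔ, A, B, hmem, hdl, hrl, hdr, hrr⟩ := hd
      have hΓ1 : Γ₁.Finite := hfΓ.subset Set.subset_union_left
      have hΓ2 : Γ₂.Finite := hfΓ.subset Set.subset_union_right
      have hΔ1 : Δ₁.Finite := hfΔ.subset Set.subset_union_left
      have hΔ2 : Δ₂.Finite := hfΔ.subset Set.subset_union_right
      rcases hmem with h1 | h2
      · have hnewA : ∀ E ∈ ({A} : Set form), ∃ D, (D ∈ Γ₁ ∨ D ∈ Δ₁) ∧ occurs E ⊆ occurs D :=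
          fun E hE => ⟨form.Or A B, Or.inl h1, by
            simp only [Set.mem_singleton_iff] at hE; subst hE; exact occurs_Or_left⟩
        have hnewB : ∀ E ∈ ({B} : Set form), ∃ D, (D ∈ Γ₁ ∨ D ∈ Δ₁) ∧ occurs E ⊆ occurs D :=
          fun E hE => ⟨form.Or A B, Or.inl h1, by
            simp only [Set.mem_singleton_iff] at hE; subst hE; exact occurs_Or_right⟩
        rcases ihl hdl ({A} ∪ Γ₁) Γ₂ Δ₁ Δ₂ (hrl.trans (seq_eq (uA1 _ _ _) rfl)) (sep_addL hsep hnewA) with hLl | hR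
        · rcases ihr hdr ({B} ∪ Γ₁) Γ₂ Δ₁ Δ₂ (hrr.trans (seq_eq (uA1 _ _ _) rfl)) (sep_addL hsep hnewB) with hLr | hR
          · exact Or.inl (derivable_OrL hΓ1 hΔ1 h1 hLl hLr)
          · exact Or.inr hR
        · exact Or.inr hR
      · have hnewA : ∀ E ∈ ({A} : Set form), ∃ D, (D ∈ Γ₂ ∨ D ∈ Δ₂) ∧ occurs E ⊆ occurs D :=
          fun E hE => ⟨form.Or A B, Or.inl h2, by
            simp only [Set.mem_singleton_iff] at hE; subst hE; exact occurs_Or_left⟩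
        have hnewB : ∀ E ∈ ({B} : Set form), ∃ D, (D ∈ Γ₂ ∨ D ∈ Δ₂) ∧ occurs E ⊆ occurs D :=
          fun E hE => ⟨form.Or A B, Or.inl h2, by
            simp only [Set.mem_singleton_iff] at hE; subst hE; exact occurs_Or_right⟩
        rcases ihl hdl ({A} ∪ Γ₂) Γ₁ Δ₂ Δ₁ (hrl.trans (seq_eq (uA2 _ _ _) (uC _ _))) (sep_addL (sep_symm hsep) hnewA) with hLl | hR
        · rcases ihr hdr ({B} ∪ Γ₂) Γ₁ Δ₂ Δ₁ (hrr.trans (seq_eq (uA2 _ _ _) (uC _ _))) (sep_addL (sep_symm hsep) hnewB) with hLr | hR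
          · exact Or.inr (derivable_OrL hΓ2 hΔ2 h2 hLl hLr)
          · exact Or.inl hR
        · exact Or.inl hR
  | OrR s d ih =>
      intro hd Γ₁ Γ₂ Δ₁ Δ₂ hr hsep
      simp only [root] at hr; subst hr
      obtain ⟨hfΓ, hfΔ, A, B, hmem, hdp, hroot⟩ := hd
      have hΓ1 : Γ₁.Finite := hfΓ.subset Set.subset_union_left
      have hΓ2 : Γ₂.Finite := hfΓ.subset Set.subset_union_right
      have hΔ1 : Δ₁.Finite := hfΔ.subset Set.subset_union_left
      have hΔ2 : Δ₂.Finite := hfΔ.subset Set.subset_union_right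
      rcases hmem with h1 | h2
      · have hnew : ∀ E ∈ ({A, B} : Set form), ∃ D, (D ∈ Γ₁ ∨ D ∈ Δ₁) ∧ occurs E ⊆ occurs D :=
          by
          intro E hE
          refine ⟨form.Or A B, Or.inr h1, ?_⟩
          simp only [Set.mem_insert_iff, Set.mem_singleton_iff] at hE
          rcases hE with rfl | rfl
          · exact occurs_Or_left
          · exact occurs_Or_right
        rcases ih hdp Γ₁ Γ₂ (Δ₁ ∪ {A, B}) Δ₂ (hroot.trans (seq_eq rfl (uB1 _ _ _))) (sep_addR hsep hnew) with hL | hR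
        · exact Or.inl (derivable_OrR hΓ1 hΔ1 h1 hL)
        · exact Or.inr hR
      · have hnew : ∀ E ∈ ({A, B} : Set form), ∃ D, (D ∈ Γ₂ ∨ D ∈ Δ₂) ∧ occurs E ⊆ occurs D :=
          by
          intro E hE
          refine ⟨form.Or A B, Or.inr h2, ?_⟩
          simp only [Set.mem_insert_iff, Set.mem_singleton_iff] at hE
          rcases hE with rfl | rfl
          · exact occurs_Or_left
          · exact occurs_Or_right
        rcases ih hdp Γ₂ Γ₁ (Δ₂ ∪ {A, B}) Δ₁ (hroot.trans (seq_eq (uC _ _) (uB2 _ _ _))) (sep_addR (sep_symm hsep) hnew) with hL | hR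
        · exact Or.inr (derivable_OrR hΓ2 hΔ2 h2 hL)
        · exact Or.inl hR
  | NotL s d ih =>
      intro hd Γ₁ Γ₂ Δ₁ Δ₂ hr hsep
      simp only [root] at hr; subst hr
      obtain ⟨hfΓ, hfΔ, C, hmem, hdp, hroot⟩ := hd
      have hΓ1 : Γ₁.Finite := hfΓ.subset Set.subset_union_left
      have hΓ2 : Γ₂.Finite := hfΓ.subset Set.subset_union_right
      have hΔ1 : Δ₁.Finite := hfΔ.subset Set.subset_union_left
      have hΔ2 : Δ₂.Finite := hfΔ.subset Set.subset_union_right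
      rcases hmem with h1 | h2
      · have hnew : ∀ E ∈ ({C} : Set form), ∃ D, (D ∈ Γ₁ ∨ D ∈ Δ₁) ∧ occurs E ⊆ occurs D :=
          fun E hE => ⟨form.Not C, Or.inl h1, by
            simp only [Set.mem_singleton_iff] at hE; rw [hE, occurs_Not]⟩
        rcases ih hdp Γ₁ Γ₂ (Δ₁ ∪ {C}) Δ₂ (hroot.trans (seq_eq rfl (uB1 _ _ _))) (sep_addR hsep hnew) with hL | hR
        · exact Or.inl (derivable_NotL hΓ1 hΔ1 h1 hL)
        · exact Or.inr hR
      · have hnew : ∀ E ∈ ({C} : Set form), ∃ D, (D ∈ Γ₂ ∨ D ∈ Δ₂) ∧ occurs E ⊆ occurs D :=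
          fun E hE => ⟨form.Not C, Or.inl h2, by
            simp only [Set.mem_singleton_iff] at hE; rw [hE, occurs_Not]⟩
        rcases ih hdp Γ₂ Γ₁ (Δ₂ ∪ {C}) Δ₁ (hroot.trans (seq_eq (uC _ _) (uB2 _ _ _))) (sep_addR (sep_symm hsep) hnew) with hL | hR
        · exact Or.inr (derivable_NotL hΓ2 hΔ2 h2 hL)
        · exact Or.inl hR
  | NotR s d ih =>
      intro hd Γ₁ Γ₂ Δ₁ Δ₂ hr hsep
      simp only [root] at hr; subst hr
      obtain ⟨hfΓ, hfΔ, C, hmem, hdp, hroot⟩ := hd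
      have hΓ1 : Γ₁.Finite := hfΓ.subset Set.subset_union_left
      have hΓ2 : Γ₂.Finite := hfΓ.subset Set.subset_union_right
      have hΔ1 : Δ₁.Finite := hfΔ.subset Set.subset_union_left
      have hΔ2 : Δ₂.Finite := hfΔ.subset Set.subset_union_right
      rcases hmem with h1 | h2
      · have hnew : ∀ E ∈ ({C} : Set form), ∃ D, (D ∈ Γ₁ ∨ D ∈ Δ₁) ∧ occurs E ⊆ occurs D :=
          fun E hE => ⟨form.Not C, Or.inr h1, by
            simp only [Set.mem_singleton_iff] at hE; rw [hE, occurs_Not]⟩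
        rcases ih hdp ({C} ∪ Γ₁) Γ₂ Δ₁ Δ₂ (hroot.trans (seq_eq (uA1 _ _ _) rfl)) (sep_addL hsep hnew) with hL | hR
        · exact Or.inl (derivable_NotR hΓ1 hΔ1 h1 hL)
        · exact Or.inr hR
      · have hnew : ∀ E ∈ ({C} : Set form), ∃ D, (D ∈ Γ₂ ∨ D ∈ Δ₂) ∧ occurs E ⊆ occurs D :=
          fun E hE => ⟨form.Not C, Or.inr h2, by
            simp only [Set.mem_singleton_iff] at hE; rw [hE, occurs_Not]⟩
        rcases ih hdp ({C} ∪ Γ₂) Γ₁ Δ₂ Δ₁ (hroot.trans (seq_eq (uA2 _ _ _) (uC _ _))) (sep_addL (sep_symm hsep) hnew) with hL | hR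
        · exact Or.inr (derivable_NotR hΓ2 hΔ2 h2 hL)
        · exact Or.inl hR
  | AllL s d ih =>
      intro hd Γ₁ Γ₂ Δ₁ Δ₂ hr hsep
      simp only [root] at hr; subst hr
      obtain ⟨hfΓ, hfΔ, A, a, t, hmem, hdp, hroot⟩ := hd
      have hΓ1 : Γ₁.Finite := hfΓ.subset Set.subset_union_left
      have hΓ2 : Γ₂.Finite := hfΓ.subset Set.subset_union_right
      have hΔ1 : Δ₁.Finite := hfΔ.subset Set.subset_union_left
      have hΔ2 : Δ₂.Finite := hfΔ.subset Set.subset_union_right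
      rcases hmem with h1 | h2
      · have hnew : ∀ E ∈ ({FAll_inst t (fAll a A)} : Set form), ∃ D, (D ∈ Γ₁ ∨ D ∈ Δ₁) ∧ occurs E ⊆ occurs D :=
          fun E hE => ⟨fAll a A, Or.inl h1, by
            simp only [Set.mem_singleton_iff] at hE; rw [hE, occurs_FAll_inst, occurs_fAll]⟩
        rcases ih hdp ({FAll_inst t (fAll a A)} ∪ Γ₁) Γ₂ Δ₁ Δ₂ (hroot.trans (seq_eq (uA1 _ _ _) rfl)) (sep_addL hsep hnew) with hL | hR
        · exact Or.inl (derivable_AllL hΓ1 hΔ1 h1 hL)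
        · exact Or.inr hR
      · have hnew : ∀ E ∈ ({FAll_inst t (fAll a A)} : Set form), ∃ D, (D ∈ Γ₂ ∨ D ∈ Δ₂) ∧ occurs E ⊆ occurs D :=
          fun E hE => ⟨fAll a A, Or.inl h2, by
            simp only [Set.mem_singleton_iff] at hE; rw [hE, occurs_FAll_inst, occurs_fAll]⟩
        rcases ih hdp ({FAll_inst t (fAll a A)} ∪ Γ₂) Γ₁ Δ₂ Δ₁ (hroot.trans (seq_eq (uA2 _ _ _) (uC _ _))) (sep_addL (sep_symm hsep) hnew) with hL | hR
        · exact Or.inr (derivable_AllL hΓ2 hΔ2 h2 hL)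
        · exact Or.inl hR
  | AllR s d ih =>
      intro hd Γ₁ Γ₂ Δ₁ Δ₂ hr hsep
      simp only [root] at hr; subst hr
      obtain ⟨hfΓ, hfΔ, a, A, hmem, hfr, hdp, hroot⟩ := hd
      have hΓ1 : Γ₁.Finite := hfΓ.subset Set.subset_union_left
      have hΓ2 : Γ₂.Finite := hfΓ.subset Set.subset_union_right
      have hΔ1 : Δ₁.Finite := hfΔ.subset Set.subset_union_left
      have hΔ2 : Δ₂.Finite := hfΔ.subset Set.subset_union_right
      rcases hmem with h1 | h2
      · have hnew : ∀ E ∈ ({A} : Set form), ∃ D, (D ∈ Γ₁ ∨ D ∈ Δ₁) ∧ occurs E ⊆ occurs D :=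
          fun E hE => ⟨fAll a A, Or.inr h1, by
            simp only [Set.mem_singleton_iff] at hE; rw [hE, occurs_fAll]⟩
        have hfr1 : a ∉ fvs (Γ₁ ∪ Δ₁) := fun hm => hfr (fvs_mono
          (by intro x hx; simp only [Set.mem_union] at hx ⊢; tauto) hm)
        rcases ih hdp Γ₁ Γ₂ (Δ₁ ∪ {A}) Δ₂ (hroot.trans (seq_eq rfl (uB1 _ _ _))) (sep_addR hsep hnew) with hL | hR
        · exact Or.inl (derivable_AllR hΓ1 hΔ1 h1 hfr1 hL)
        · exact Or.inr hR
      · have hnew : ∀ E ∈ ({A} : Set form), ∃ D, (D ∈ Γ₂ ∨ D ∈ Δ₂) ∧ occurs E ⊆ occurs D :=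
          fun E hE => ⟨fAll a A, Or.inr h2, by
            simp only [Set.mem_singleton_iff] at hE; rw [hE, occurs_fAll]⟩
        have hfr2 : a ∉ fvs (Γ₂ ∪ Δ₂) := fun hm => hfr (fvs_mono
          (by intro x hx; simp only [Set.mem_union] at hx ⊢; tauto) hm)
        rcases ih hdp Γ₂ Γ₁ (Δ₂ ∪ {A}) Δ₁ (hroot.trans (seq_eq (uC _ _) (uB2 _ _ _))) (sep_addR (sep_symm hsep) hnew) with hL | hR
        · exact Or.inr (derivable_AllR hΓ2 hΔ2 h2 hfr2 hL)
        · exact Or.inl hR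
  | ExL s d ih =>
      intro hd Γ₁ Γ₂ Δ₁ Δ₂ hr hsep
      simp only [root] at hr; subst hr
      obtain ⟨hfΓ, hfΔ, a, A, hmem, hfr, hdp, hroot⟩ := hd
      have hΓ1 : Γ₁.Finite := hfΓ.subset Set.subset_union_left
      have hΓ2 : Γ₂.Finite := hfΓ.subset Set.subset_union_right
      have hΔ1 : Δ₁.Finite := hfΔ.subset Set.subset_union_left
      have hΔ2 : Δ₂.Finite := hfΔ.subset Set.subset_union_right
      rcases hmem with h1 | h2
      · have hnew : ∀ E ∈ ({A} : Set form), ∃ D, (D ∈ Γ₁ ∨ D ∈ Δ₁) ∧ occurs E ⊆ occurs D :=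
          fun E hE => ⟨fEx a A, Or.inl h1, by
            simp only [Set.mem_singleton_iff] at hE; rw [hE, occurs_fEx]⟩
        have hfr1 : a ∉ fvs (Γ₁ ∪ Δ₁) := fun hm => hfr (fvs_mono
          (by intro x hx; simp only [Set.mem_union] at hx ⊢; tauto) hm)
        rcases ih hdp ({A} ∪ Γ₁) Γ₂ Δ₁ Δ₂ (hroot.trans (seq_eq (uA1 _ _ _) rfl)) (sep_addL hsep hnew) with hL | hR
        · exact Or.inl (derivable_ExL hΓ1 hΔ1 h1 hfr1 hL)
        · exact Or.inr hR
      · have hnew : ∀ E ∈ ({A} : Set form), ∃ D, (D ∈ Γ₂ ∨ D ∈ Δ₂) ∧ occurs E ⊆ occurs D :=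
          fun E hE => ⟨fEx a A, Or.inl h2, by
            simp only [Set.mem_singleton_iff] at hE; rw [hE, occurs_fEx]⟩
        have hfr2 : a ∉ fvs (Γ₂ ∪ Δ₂) := fun hm => hfr (fvs_mono
          (by intro x hx; simp only [Set.mem_union] at hx ⊢; tauto) hm)
        rcases ih hdp ({A} ∪ Γ₂) Γ₁ Δ₂ Δ₁ (hroot.trans (seq_eq (uA2 _ _ _) (uC _ _))) (sep_addL (sep_symm hsep) hnew) with hL | hR
        · exact Or.inr (derivable_ExL hΓ2 hΔ2 h2 hfr2 hL)
        · exact Or.inl hR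
  | ExR s d ih =>
      intro hd Γ₁ Γ₂ Δ₁ Δ₂ hr hsep
      simp only [root] at hr; subst hr
      obtain ⟨hfΓ, hfΔ, A, a, t, hmem, hdp, hroot⟩ := hd
      have hΓ1 : Γ₁.Finite := hfΓ.subset Set.subset_union_left
      have hΓ2 : Γ₂.Finite := hfΓ.subset Set.subset_union_right
      have hΔ1 : Δ₁.Finite := hfΔ.subset Set.subset_union_left
      have hΔ2 : Δ₂.Finite := hfΔ.subset Set.subset_union_right
      rcases hmem with h1 | h2
      · have hnew : ∀ E ∈ ({FEx_inst t (fEx a A)} : Set form), ∃ D, (D ∈ Γ₁ ∨ D ∈ Δ₁) ∧ occurs E ⊆ occurs D :=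
          fun E hE => ⟨fEx a A, Or.inr h1, by
            simp only [Set.mem_singleton_iff] at hE; rw [hE, occurs_FEx_inst, occurs_fEx]⟩
        rcases ih hdp Γ₁ Γ₂ (Δ₁ ∪ {FEx_inst t (fEx a A)}) Δ₂ (hroot.trans (seq_eq rfl (uB1 _ _ _))) (sep_addR hsep hnew) with hL | hR
        · exact Or.inl (derivable_ExR hΓ1 hΔ1 h1 hL)
        · exact Or.inr hR
      · have hnew : ∀ E ∈ ({FEx_inst t (fEx a A)} : Set form), ∃ D, (D ∈ Γ₂ ∨ D ∈ Δ₂) ∧ occurs E ⊆ occurs D :=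
          fun E hE => ⟨fEx a A, Or.inr h2, by
            simp only [Set.mem_singleton_iff] at hE; rw [hE, occurs_FEx_inst, occurs_fEx]⟩
        rcases ih hdp Γ₂ Γ₁ (Δ₂ ∪ {FEx_inst t (fEx a A)}) Δ₁ (hroot.trans (seq_eq (uC _ _) (uB2 _ _ _))) (sep_addR (sep_symm hsep) hnew) with hL | hR
        · exact Or.inr (derivable_ExR hΓ2 hΔ2 h2 hL)
        · exact Or.inl hR
  | WL s d ih =>
      intro hd Γ₁ Γ₂ Δ₁ Δ₂ hr hsep
      simp only [root] at hr; subst hr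
      obtain ⟨Γ, Δ, A, hfΓ, hfΔ, hdp, hroot, hs⟩ := hd
      have hG : Γ₁ ∪ Γ₂ = {A} ∪ Γ := congrArg Prod.fst hs
      have hD : Δ₁ ∪ Δ₂ = Δ := congrArg Prod.snd hs
      have hfG : (Γ₁ ∪ Γ₂).Finite := hG ▸ ((Set.finite_singleton A).union hfΓ)
      have hfD : (Δ₁ ∪ Δ₂).Finite := hD ▸ hfΔ
      have hΓ1 : Γ₁.Finite := hfG.subset Set.subset_union_left
      have hΓ2 : Γ₂.Finite := hfG.subset Set.subset_union_right
      have hΔ1 : Δ₁.Finite := hfD.subset Set.subset_union_left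
      have hΔ2 : Δ₂.Finite := hfD.subset Set.subset_union_right
      have hGeq : (Γ₁ ∩ Γ) ∪ (Γ₂ ∩ Γ) = Γ := by
        have h := Set.ext_iff.1 hG
        ext x
        have hx := h x
        simp only [Set.mem_union, Set.mem_inter_iff, Set.mem_singleton_iff] at hx ⊢
        tauto
      rcases ih hdp (Γ₁ ∩ Γ) (Γ₂ ∩ Γ) Δ₁ Δ₂ (hroot.trans (seq_eq hGeq.symm hD.symm))
        (sep_mono hsep Set.inter_subset_left (Set.Subset.refl _)
          Set.inter_subset_left (Set.Subset.refl _)) with hL | hR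
      · exact Or.inl (derivable_weaken hL Set.inter_subset_left (Set.Subset.refl _) hΓ1 hΔ1)
      · exact Or.inr (derivable_weaken hR Set.inter_subset_left (Set.Subset.refl _) hΓ2 hΔ2)
  | WR s d ih =>
      intro hd Γ₁ Γ₂ Δ₁ Δ₂ hr hsep
      simp only [root] at hr; subst hr
      obtain ⟨Γ, Δ, A, hfΓ, hfΔ, hdp, hroot, hs⟩ := hd
      have hG : Γ₁ ∪ Γ₂ = Γ := congrArg Prod.fst hs
      have hD : Δ₁ ∪ Δ₂ = Δ ∪ {A} := congrArg Prod.snd hs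
      have hfG : (Γ₁ ∪ Γ₂).Finite := hG ▸ hfΓ
      have hfD : (Δ₁ ∪ Δ₂).Finite := hD ▸ (hfΔ.union (Set.finite_singleton A))
      have hΓ1 : Γ₁.Finite := hfG.subset Set.subset_union_left
      have hΓ2 : Γ₂.Finite := hfG.subset Set.subset_union_right
      have hΔ1 : Δ₁.Finite := hfD.subset Set.subset_union_left
      have hΔ2 : Δ₂.Finite := hfD.subset Set.subset_union_right
      have hDeq : (Δ₁ ∩ Δ) ∪ (Δ₂ ∩ Δ) = Δ := by
        have h := Set.ext_iff.1 hD
        ext x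
        have hx := h x
        simp only [Set.mem_union, Set.mem_inter_iff, Set.mem_singleton_iff] at hx ⊢
        tauto
      rcases ih hdp Γ₁ Γ₂ (Δ₁ ∩ Δ) (Δ₂ ∩ Δ) (hroot.trans (seq_eq hG.symm hDeq.symm))
        (sep_mono hsep (Set.Subset.refl _) Set.inter_subset_left
          (Set.Subset.refl _) Set.inter_subset_left) with hL | hR
      · exact Or.inl (derivable_weaken hL (Set.Subset.refl _) Set.inter_subset_left hΓ1 hΔ1)
      · exact Or.inr (derivable_weaken hR (Set.Subset.refl _) Set.inter_subset_left hΓ2 hΔ2)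

theorem split_final {Γ₁ Γ₂ Δ₁ Δ₂ : Set form}
    (hsep : SepCond Γ₁ Δ₁ Γ₂ Δ₂) (hder : derivable (Γ₁ ∪ Γ₂, Δ₁ ∪ Δ₂)) :
    derivable (Γ₁, Δ₁) ∨ derivable (Γ₂, Δ₂) := by
  obtain ⟨d, hd, hroot⟩ := hder
  exact split d hd Γ₁ Γ₂ Δ₁ Δ₂ hroot hsep

theorem craig_disjoint_languages (Γ₁ Γ₂ Δ₁ Δ₂ : Set form)
    (hdisj : (⋃ A ∈ Γ₁ ∪ Δ₁, occurs A) ∩ (⋃ A ∈ Γ₂ ∪ Δ₂, occurs A) = ∅)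
    (hder : derivable (Γ₁ ∪ Γ₂, Δ₁ ∪ Δ₂)) :
    derivable (Γ₁, Δ₁) ∨ derivable (Γ₂, Δ₂) := by
  apply split_final _ hder
  intro p A B hA hB hpA hpB
  have h1 : p ∈ ⋃ A ∈ Γ₁ ∪ Δ₁, occurs A := by
    simp only [Set.mem_iUnion, Set.mem_union]
    exact ⟨A, hA, hpA⟩
  have h2 : p ∈ ⋃ A ∈ Γ₂ ∪ Δ₂, occurs A := by
    simp only [Set.mem_iUnion, Set.mem_union]
    exact ⟨B, hB, hpB⟩
  have : p ∈ (⋃ A ∈ Γ₁ ∪ Δ₁, occurs A) ∩ ⋃ A ∈ Γ₂ ∪ Δ₂, occurs A := ⟨h1, h2⟩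
  rw [hdisj] at this
  exact this

end Craig
end

section
/- The ∧R case of the interpolation construction: if C' interpolates (Γ₁ ⊢ Δ₁, A, C' and C', Γ₂ ⊢ Δ₂) and C'' interpolates (Γ₁ ⊢ Δ₁, B, C'' and C'', Γ₂ ⊢ Δ₂), and A ∧ B ∈ Δ₁, then C' ∨ C'' interpolates: Γ₁ ⊢ Δ₁, C' ∨ C'' and C' ∨ C'', Γ₂ ⊢ Δ₂ are derivable. -/
namespace Craig

theorem deriv_root_finite (d : Deriv) (h : is_deriv d) :
    (root d).1.Finite ∧ (root d).2.Finite := by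
  cases d <;> simp only [is_deriv, root] at h ⊢
  case WL s d =>
    obtain ⟨Γ, Δ, A, hΓ, hΔ, _, _, hs⟩ := h
    subst hs; exact ⟨(Set.finite_singleton A).union hΓ, hΔ⟩
  case WR s d =>
    obtain ⟨Γ, Δ, A, hΓ, hΔ, _, _, hs⟩ := h
    subst hs; exact ⟨hΓ, hΔ.union (Set.finite_singleton A)⟩
  all_goals exact ⟨h.1, h.2.1⟩

theorem andR_interpolation_case (Γ₁ Γ₂ Δ₁ Δ₂ : Set form) (A B C' C'' : form)
    (hmem : form.And A B ∈ Δ₁)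
    (h1 : derivable (Γ₁, Δ₁ ∪ {A, C'}))
    (h2 : derivable ({C'} ∪ Γ₂, Δ₂))
    (h3 : derivable (Γ₁, Δ₁ ∪ {B, C''}))
    (h4 : derivable ({C''} ∪ Γ₂, Δ₂)) :
    derivable (Γ₁, Δ₁ ∪ {form.Or C' C''}) ∧
    derivable ({form.Or C' C''} ∪ Γ₂, Δ₂) := by
  obtain ⟨d1, hd1, hr1⟩ := h1
  obtain ⟨d2, hd2, hr2⟩ := h2
  obtain ⟨d3, hd3, hr3⟩ := h3
  obtain ⟨d4, hd4, hr4⟩ := h4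
  have hf1 := deriv_root_finite d1 hd1
  have hf2 := deriv_root_finite d2 hd2
  rw [hr1] at hf1
  rw [hr2] at hf2
  have hΓ₁ : Γ₁.Finite := hf1.1
  have hΔ₁ : Δ₁.Finite := hf1.2.subset Set.subset_union_left
  have hΓ₂ : Γ₂.Finite := hf2.1.subset Set.subset_union_right
  have hΔ₂ : Δ₂.Finite := hf2.2
  constructor
  · -- left: Γ₁ ⊢ Δ₁ ∪ {C' ∨ C''}
    -- branch for A
    set sA : Seq := (Γ₁, Δ₁ ∪ {form.Or C' C''} ∪ {A}) with hsA
    set sB : Seq := (Γ₁, Δ₁ ∪ {form.Or C' C''} ∪ {B}) with hsB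
    have finΔ : ∀ (X : Set form), X.Finite → (Δ₁ ∪ X).Finite :=
      fun X hX => hΔ₁.union hX
    -- A branch derivation
    have dAbranch : ∃ dA, is_deriv dA ∧ root dA = sA := by
      refine ⟨.OrR sA (.WR (sA.1, sA.2 ∪ {C', C''}) (.WR (Γ₁, (Δ₁ ∪ {A, C'}) ∪ {form.Or C' C''}) d1)), ?_, rfl⟩
      refine ⟨hΓ₁, (finΔ _ (Set.finite_singleton _)).union (Set.finite_singleton _), C', C'', by simp [hsA], ?_, rfl⟩
      refine ⟨Γ₁, (Δ₁ ∪ {A, C'}) ∪ {form.Or C' C''}, C'', hΓ₁,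
          (finΔ _ ((Set.finite_singleton _).insert _)).union (Set.finite_singleton _), ?_, rfl, ?_⟩
      · exact ⟨Γ₁, Δ₁ ∪ {A, C'}, form.Or C' C'', hΓ₁, finΔ _ ((Set.finite_singleton _).insert _), hd1, hr1, rfl⟩
      · have h2 : (sA.2 ∪ {C', C''} : Set form) = ((Δ₁ ∪ {A, C'}) ∪ {form.Or C' C''}) ∪ {C''} := by
          simp only [hsA]; ext x; simp; tauto
        exact congrArg (Prod.mk Γ₁) h2
    have dBbranch : ∃ dB, is_deriv dB ∧ root dB = sB := by
      refine ⟨.OrR sB (.WR (sB.1, sB.2 ∪ {C', C''}) (.WR (Γ₁, (Δ₁ ∪ {B, C''}) ∪ {form.Or C' C''}) d3)), ?_, rfl⟩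
      refine ⟨hΓ₁, (finΔ _ (Set.finite_singleton _)).union (Set.finite_singleton _), C', C'', by simp [hsB], ?_, rfl⟩
      refine ⟨Γ₁, (Δ₁ ∪ {B, C''}) ∪ {form.Or C' C''}, C', hΓ₁,
          (finΔ _ ((Set.finite_singleton _).insert _)).union (Set.finite_singleton _), ?_, rfl, ?_⟩
      · exact ⟨Γ₁, Δ₁ ∪ {B, C''}, form.Or C' C'', hΓ₁, finΔ _ ((Set.finite_singleton _).insert _), hd3, hr3, rfl⟩
      · have h2 : (sB.2 ∪ {C', C''} : Set form) = ((Δ₁ ∪ {B, C''}) ∪ {form.Or C' C''}) ∪ {C'} := by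
          simp only [hsB]; ext x; simp; tauto
        exact congrArg (Prod.mk Γ₁) h2
    obtain ⟨dA, hdA, hrA⟩ := dAbranch
    obtain ⟨dB, hdB, hrB⟩ := dBbranch
    refine ⟨.AndR (Γ₁, Δ₁ ∪ {form.Or C' C''}) dA dB, ?_, rfl⟩
    exact ⟨hΓ₁, finΔ _ (Set.finite_singleton _), A, B, Or.inl hmem, hdA, hrA, hdB, hrB⟩
  · -- right: {C' ∨ C''} ∪ Γ₂ ⊢ Δ₂
    set s : Seq := ({form.Or C' C''} ∪ Γ₂, Δ₂) with hs
    have hleft : ∀ (C : form), {C} ∪ ({form.Or C' C''} ∪ Γ₂) = {form.Or C' C''} ∪ ({C} ∪ Γ₂) := by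
      intro C; ext x; simp; tauto
    refine ⟨.OrL s (.WL ({C'} ∪ s.1, Δ₂) d2) (.WL ({C''} ∪ s.1, Δ₂) d4), ?_, rfl⟩
    refine ⟨(Set.finite_singleton _).union hΓ₂, hΔ₂, C', C'', by simp [hs], ?_, ?_, ?_, ?_⟩
    · exact ⟨{C'} ∪ Γ₂, Δ₂, form.Or C' C'', (Set.finite_singleton _).union hΓ₂, hΔ₂, hd2, hr2, by
        simp only [hs]; rw [← hleft C']⟩
    · rfl
    · exact ⟨{C''} ∪ Γ₂, Δ₂, form.Or C' C'', (Set.finite_singleton _).union hΓ₂, hΔ₂, hd4, hr4, by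
        simp only [hs]; rw [← hleft C'']⟩
    · rfl

end Craig
end
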